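/- Let Q be a property of pairs (G, H) consisting of a profinite group G and a closed subgroup H ≤ G, satisfying: (a) if Q(G,H) and K is a closed subgroup of G, then Q(K, H ∩ K); (b) if Q(G,H) and π : G → G' is a continuous homomorphism of profinite groups, then Q(π(G), π(H)); (c) if Q(G,H) and Q(G,K), then Q(G, M), where M is the smallest closed subgroup of G containing H and K; (d) if (H_i)_{i ∈ I} is a family of closed subgroups of G totally ordered by inclusion with Q(G,H_i) for all i, then Q(G, J), where J is the topological closure of ⋃_{i ∈ I} H_i. Then for every d ≥ 2 and every closed fractal subgroup G of Aut T_d, the property H ↦ Q(G,H) of closed subgroups of G is self-similar: if Q(G,H) holds, then Q(G, J) holds for J the self-similar closure of H in G. -/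

import Mathlib

open scoped Pointwise

namespace TreeDyn

/-- Vertices of the `d`-regular rooted tree: finite words over `{0,…,d-1}`,
with the empty word as root and children of `w` the words `w ++ [x]`. -/
abbrev Vertex (d : ℕ) := List (Fin d)

/-- A function on words is length-preserving and prefix-preserving. -/
def LP (d : ℕ) (f : Vertex d → Vertex d) : Prop :=
  (∀ w : Vertex d, (f w).length = w.length) ∧
    ∀ v w : Vertex d, v <+: w → f v <+: f w

theorem LP.id' (d : ℕ) : LP d id := ⟨fun _ => rfl, fun _ _ h => h⟩

theorem LP.comp {d : ℕ} {f g : Vertex d → Vertex d} (hf : LP d f) (hg : LP d g) :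
    LP d (f ∘ g) :=
  ⟨fun w => (hf.1 (g w)).trans (hg.1 w), fun v w h => hf.2 _ _ (hg.2 _ _ h)⟩

/-- The automorphism group of the rooted `d`-regular tree, realized as the subgroup of
permutations of the vertex set which fix the root and preserve the child relation
(equivalently: length- and prefix-preserving permutations). -/
def treeAut (d : ℕ) : Subgroup (Equiv.Perm (Vertex d)) where
  carrier := {g | LP d ⇑g ∧ LP d ⇑g⁻¹}
  one_mem' := ⟨LP.id' d, by simpa using LP.id' d⟩
  mul_mem' := by
    rintro a b ⟨ha1, ha2⟩ ⟨hb1, hb2⟩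
    refine ⟨?_, ?_⟩
    · simpa [Equiv.Perm.coe_mul] using ha1.comp hb1
    · rw [mul_inv_rev]
      simpa [Equiv.Perm.coe_mul] using hb2.comp ha2
  inv_mem' := by
    rintro a ⟨h1, h2⟩
    exact ⟨h2, by simpa using h1⟩

/-- `Aut T_d`, the automorphism group of the `d`-regular rooted tree. -/
abbrev AutT (d : ℕ) := ↥(treeAut d)

namespace AutT

variable {d : ℕ}

/-- The underlying permutation of the vertices. -/
def toPerm (g : AutT d) : Equiv.Perm (Vertex d) := g.1

theorem toPerm_mul (g h : AutT d) : (g * h).toPerm = g.toPerm * h.toPerm := rfl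

theorem toPerm_inv (g : AutT d) : (g⁻¹).toPerm = (g.toPerm)⁻¹ := rfl

theorem toPerm_one : (1 : AutT d).toPerm = 1 := rfl

theorem length_apply (g : AutT d) (w : Vertex d) : (g.toPerm w).length = w.length :=
  g.2.1.1 w

theorem prefix_apply (g : AutT d) {v w : Vertex d} (h : v <+: w) :
    g.toPerm v <+: g.toPerm w :=
  g.2.1.2 v w h

theorem take_apply (g : AutT d) (v u : Vertex d) :
    (g.toPerm (v ++ u)).take v.length = g.toPerm v := by
  have h : g.toPerm v <+: g.toPerm (v ++ u) := g.prefix_apply (List.prefix_append v u)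
  have h2 := List.prefix_iff_eq_take.mp h
  rw [length_apply] at h2
  exact h2.symm

theorem apply_append (g : AutT d) (v u : Vertex d) :
    g.toPerm (v ++ u) = g.toPerm v ++ (g.toPerm (v ++ u)).drop v.length := by
  conv_lhs => rw [← List.take_append_drop v.length (g.toPerm (v ++ u))]
  rw [take_apply]

/-- The section function: the action of `g` on the subtree over `v`, transported
to the whole tree. -/
def secFun (g : AutT d) (v : Vertex d) : Vertex d → Vertex d :=
  fun u => (g.toPerm (v ++ u)).drop v.length

theorem secFun_spec (g : AutT d) (v u : Vertex d) :
    g.toPerm (v ++ u) = g.toPerm v ++ secFun g v u :=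
  apply_append g v u

theorem secFun_left (g : AutT d) (v u : Vertex d) :
    secFun g⁻¹ (g.toPerm v) (secFun g v u) = u := by
  have h1 := secFun_spec g⁻¹ (g.toPerm v) (secFun g v u)
  rw [← secFun_spec g v u] at h1
  rw [toPerm_inv] at h1
  simp only [Equiv.Perm.inv_def, Equiv.symm_apply_apply] at h1
  exact (List.append_cancel_left h1).symm

theorem LP_secFun (g : AutT d) (v : Vertex d) : LP d (secFun g v) := by
  constructor
  · intro w
    simp only [secFun, List.length_drop, length_apply, List.length_append]
    omega
  · intro u1 u2 h
    have h2 : g.toPerm (v ++ u1) <+: g.toPerm (v ++ u2) := by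
      refine g.prefix_apply ?_
      obtain ⟨t, ht⟩ := h
      exact ⟨t, by rw [List.append_assoc, ht]⟩
    exact h2.drop v.length

/-- The section of the tree automorphism `g` at the vertex `v`: the automorphism `g|_v` with
`g (v ++ u) = g v ++ g|_v u`. -/
def sec (g : AutT d) (v : Vertex d) : AutT d :=
  ⟨{ toFun := secFun g v
     invFun := secFun g⁻¹ (g.toPerm v)
     left_inv := secFun_left g v
     right_inv := by
       intro u
       have h := secFun_left g⁻¹ (g.toPerm v) u
       rw [inv_inv] at h
       rw [toPerm_inv] at h
       simp only [Equiv.Perm.inv_def, Equiv.symm_apply_apply] at h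
       exact h },
   by
     refine ⟨LP_secFun g v, ?_⟩
     have : ⇑(({ toFun := secFun g v
                 invFun := secFun g⁻¹ (g.toPerm v)
                 left_inv := secFun_left g v
                 right_inv := by
                   intro u
                   have h := secFun_left g⁻¹ (g.toPerm v) u
                   rw [inv_inv] at h
                   rw [toPerm_inv] at h
                   simp only [Equiv.Perm.inv_def, Equiv.symm_apply_apply] at h
                   exact h } : Equiv.Perm (Vertex d))⁻¹) = secFun g⁻¹ (g.toPerm v) := rfl
     rw [this]
     exact LP_secFun g⁻¹ (g.toPerm v)⟩

theorem sec_apply (g : AutT d) (v u : Vertex d) :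
    (sec g v).toPerm u = (g.toPerm (v ++ u)).drop v.length := rfl

end AutT

open AutT

/-- The stabilizer of the vertex `v` in `Aut T_d`. -/
def stabT (d : ℕ) (v : Vertex d) : Subgroup (AutT d) where
  carrier := {g | g.toPerm v = v}
  one_mem' := rfl
  mul_mem' := by
    intro a b ha hb
    show (a * b).toPerm v = v
    rw [toPerm_mul, Equiv.Perm.mul_apply]
    rw [show b.toPerm v = v from hb, show a.toPerm v = v from ha]
  inv_mem' := by
    intro a ha
    show (a⁻¹).toPerm v = v
    rw [toPerm_inv]
    rw [Equiv.Perm.inv_eq_iff_eq]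
    exact (show a.toPerm v = v from ha).symm

/-- The self-similarity homomorphism `π_v` from the stabilizer of `v` to `Aut T_d`,
`g ↦ g|_v`. -/
def secHom (d : ℕ) (v : Vertex d) : (stabT d v) →* AutT d where
  toFun g := sec g.1 v
  map_one' := by
    apply Subtype.ext
    apply Equiv.ext
    intro u
    show ((1 : AutT d).toPerm (v ++ u)).drop v.length = (1 : AutT d).toPerm u
    rw [toPerm_one]
    simp [List.drop_left]
  map_mul' := by
    intro a b
    apply Subtype.ext
    apply Equiv.ext
    intro u
    have hb : (b.1).toPerm v = v := b.2
    show ((a.1 * b.1).toPerm (v ++ u)).drop v.length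
        = (sec a.1 v).toPerm ((sec b.1 v).toPerm u)
    rw [toPerm_mul, Equiv.Perm.mul_apply]
    congr 1
    congr 1
    have h := secFun_spec b.1 v u
    rw [hb] at h
    exact h

/-- The image subgroup `H^v = π_v(H_v)` of the stabilizer of `v` in `H` under the
self-similarity map. -/
def secSG (d : ℕ) (H : Subgroup (AutT d)) (v : Vertex d) : Subgroup (AutT d) :=
  (H.subgroupOf (stabT d v)).map (secHom d v)

/-- A subgroup of `Aut T_d` is self-similar if `H^v ≤ H` for every vertex `v`. -/
def IsSelfSimilar (d : ℕ) (H : Subgroup (AutT d)) : Prop :=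
  ∀ v : Vertex d, secSG d H v ≤ H

/-- A subgroup of `Aut T_d` is fractal if `H^v = H` for every vertex `v`. -/
def IsFractal (d : ℕ) (H : Subgroup (AutT d)) : Prop :=
  ∀ v : Vertex d, secSG d H v = H

end TreeDyn
namespace TreeDyn

open AutT

variable {d : ℕ}

instance : TopologicalSpace (Vertex d) := ⊥
instance : DiscreteTopology (Vertex d) := ⟨rfl⟩

/-- The profinite topology on `Aut T_d`: the topology of pointwise convergence on vertices. -/
instance : TopologicalSpace (AutT d) :=
  TopologicalSpace.induced (fun g : AutT d => (g.toPerm : Vertex d → Vertex d)) inferInstance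

theorem continuous_toFun : Continuous fun g : AutT d => (g.toPerm : Vertex d → Vertex d) :=
  continuous_induced_dom

theorem continuous_ev (x : Vertex d) : Continuous fun g : AutT d => g.toPerm x :=
  (continuous_apply x).comp continuous_toFun

instance : IsTopologicalGroup (AutT d) where
  continuous_mul := by
    apply continuous_induced_rng.2
    show Continuous fun p : AutT d × AutT d => ((p.1 * p.2).toPerm : Vertex d → Vertex d)
    apply continuous_pi
    intro x
    rw [continuous_discrete_rng]
    intro z
    have heq : ((fun p : AutT d × AutT d => (p.1 * p.2).toPerm x)) ⁻¹' {z}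
        = ⋃ y : Vertex d, ((fun p : AutT d × AutT d => p.2.toPerm x) ⁻¹' {y})
            ∩ ((fun p : AutT d × AutT d => p.1.toPerm y) ⁻¹' {z}) := by
      ext p
      simp only [Set.mem_preimage, Set.mem_singleton_iff, Set.mem_iUnion, Set.mem_inter_iff]
      constructor
      · intro h
        exact ⟨p.2.toPerm x, rfl, by rw [toPerm_mul, Equiv.Perm.mul_apply] at h; exact h⟩
      · rintro ⟨y, h1, h2⟩
        rw [toPerm_mul, Equiv.Perm.mul_apply, h1, h2]
    rw [heq]
    apply isOpen_iUnion
    intro y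
    exact ((isOpen_discrete _).preimage ((continuous_ev x).comp continuous_snd)).inter
      ((isOpen_discrete _).preimage ((continuous_ev y).comp continuous_fst))
  continuous_inv := by
    apply continuous_induced_rng.2
    show Continuous fun g : AutT d => ((g⁻¹).toPerm : Vertex d → Vertex d)
    apply continuous_pi
    intro x
    rw [continuous_discrete_rng]
    intro z
    have heq : (fun g : AutT d => (g⁻¹).toPerm x) ⁻¹' {z}
        = (fun g : AutT d => g.toPerm z) ⁻¹' {x} := by
      ext g
      simp only [Set.mem_preimage, Set.mem_singleton_iff]
      rw [toPerm_inv]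
      exact Equiv.Perm.inv_eq_iff_eq.trans eq_comm
    rw [heq]
    exact (isOpen_discrete _).preimage (continuous_ev z)

end TreeDyn
namespace TreeDyn

open AutT

/-- `J` is the self-similar closure of `H` in `G`: the smallest closed self-similar
subgroup of `G` containing `H`. -/
def IsSelfSimilarClosure (d : ℕ) (G H J : Subgroup (AutT d)) : Prop :=
  H ≤ J ∧ J ≤ G ∧ IsClosed (J : Set (AutT d)) ∧ IsSelfSimilar d J ∧
    ∀ J' : Subgroup (AutT d), H ≤ J' → J' ≤ G → IsClosed (J' : Set (AutT d)) →
      IsSelfSimilar d J' → J ≤ J'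

/-- The pointwise stabilizer in `Aut T_d` of the vertices at level `m`. -/
def levelStab (d : ℕ) (m : ℕ) : Subgroup (AutT d) where
  carrier := {g | ∀ v : Vertex d, v.length = m → g.toPerm v = v}
  one_mem' := fun _ _ => rfl
  mul_mem' := by
    intro a b ha hb v hv
    show (a * b).toPerm v = v
    rw [toPerm_mul, Equiv.Perm.mul_apply, hb v hv, ha v hv]
  inv_mem' := by
    intro a ha v hv
    show (a⁻¹).toPerm v = v
    rw [toPerm_inv, Equiv.Perm.inv_eq_iff_eq]
    exact (ha v hv).symm

/-- A topological group is pronilpotent if its quotient by every open normal subgroup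
is nilpotent. -/
def Pronilpotent (G : Type*) [Group G] [TopologicalSpace G] : Prop :=
  ∀ (N : Subgroup G) [N.Normal], IsOpen (N : Set G) → Group.IsNilpotent (G ⧸ N)

/-- A topological group is pro-`p` if its quotient by every open normal subgroup
is a `p`-group. -/
def IsProP (p : ℕ) (G : Type*) [Group G] [TopologicalSpace G] : Prop :=
  ∀ (N : Subgroup G) [N.Normal], IsOpen (N : Set G) → IsPGroup p (G ⧸ N)

/-- A topological group is prosolvable if its quotient by every open normal subgroup
is solvable. -/
def Prosolvable (G : Type*) [Group G] [TopologicalSpace G] : Prop :=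
  ∀ (N : Subgroup G) [N.Normal], IsOpen (N : Set G) → IsSolvable (G ⧸ N)

/-- The Frattini subgroup of a topological group: the intersection of its
maximal open (proper) subgroups. -/
def frattiniOpen (G : Type*) [Group G] [TopologicalSpace G] : Subgroup G :=
  sInf {M : Subgroup G | IsOpen (M : Set G) ∧ M ≠ ⊤ ∧
    ∀ M' : Subgroup G, IsOpen (M' : Set G) → M < M' → M' = ⊤}

end TreeDyn
namespace TreeDyn

open AutT

variable {d : ℕ}

/-- The cyclic successor on `Fin d`. -/
def succFin (x : Fin d) : Fin d :=
  ⟨(x.1 + 1) % d, Nat.mod_lt _ (Nat.lt_of_le_of_lt (Nat.zero_le _) x.2)⟩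

/-- The cyclic predecessor on `Fin d`. -/
def predFin (x : Fin d) : Fin d :=
  ⟨(x.1 + (d - 1)) % d, Nat.mod_lt _ (Nat.lt_of_le_of_lt (Nat.zero_le _) x.2)⟩

theorem predFin_succFin (x : Fin d) : predFin (succFin x) = x := by
  have hd : 0 < d := Nat.lt_of_le_of_lt (Nat.zero_le _) x.2
  apply Fin.ext
  show ((x.1 + 1) % d + (d - 1)) % d = x.1
  rw [Nat.mod_add_mod, show x.1 + 1 + (d - 1) = x.1 + d by omega, Nat.add_mod_right,
    Nat.mod_eq_of_lt x.2]

theorem succFin_predFin (x : Fin d) : succFin (predFin x) = x := by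
  have hd : 0 < d := Nat.lt_of_le_of_lt (Nat.zero_le _) x.2
  apply Fin.ext
  show ((x.1 + (d - 1)) % d + 1) % d = x.1
  rw [Nat.mod_add_mod, show x.1 + (d - 1) + 1 = x.1 + d by omega, Nat.add_mod_right,
    Nat.mod_eq_of_lt x.2]

theorem succFin_val_eq_zero_iff (x : Fin d) : (succFin x).1 = 0 ↔ x.1 + 1 = d := by
  show (x.1 + 1) % d = 0 ↔ x.1 + 1 = d
  by_cases h : x.1 + 1 = d
  · simp [h, Nat.mod_self]
  · rw [Nat.mod_eq_of_lt (by omega)]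
    omega

theorem predFin_val_succ_eq_iff (x : Fin d) : (predFin x).1 + 1 = d ↔ x.1 = 0 := by
  have hd : 0 < d := Nat.lt_of_le_of_lt (Nat.zero_le _) x.2
  show (x.1 + (d - 1)) % d + 1 = d ↔ x.1 = 0
  rcases Nat.eq_zero_or_pos x.1 with h | h
  · rw [h]
    simp only [Nat.zero_add]
    rw [Nat.mod_eq_of_lt (show d - 1 < d by omega)]
    simp only [iff_true, eq_self_iff_true]
    omega
  · rw [show x.1 + (d - 1) = (x.1 - 1) + d by omega, Nat.add_mod_right,
      Nat.mod_eq_of_lt (show x.1 - 1 < d by omega)]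
    omega

/-- The odometer function: adds one with carrying, on words read root-first. -/
def odF (d : ℕ) : Vertex d → Vertex d
  | [] => []
  | x :: u => succFin x :: (if x.1 + 1 = d then odF d u else u)

/-- The inverse odometer function. -/
def odG (d : ℕ) : Vertex d → Vertex d
  | [] => []
  | x :: u => predFin x :: (if x.1 = 0 then odG d u else u)

theorem odG_odF (u : Vertex d) : odG d (odF d u) = u := by
  induction u with
  | nil => rfl
  | cons x t ih =>
    simp only [odF, odG, predFin_succFin]
    by_cases h : x.1 + 1 = d
    · rw [if_pos h, if_pos ((succFin_val_eq_zero_iff x).mpr h), ih]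
    · rw [if_neg h, if_neg (fun hc => h ((succFin_val_eq_zero_iff x).mp hc))]

theorem odF_odG (u : Vertex d) : odF d (odG d u) = u := by
  induction u with
  | nil => rfl
  | cons x t ih =>
    simp only [odF, odG, succFin_predFin]
    by_cases h : x.1 = 0
    · rw [if_pos h, if_pos ((predFin_val_succ_eq_iff x).mpr h), ih]
    · rw [if_neg h, if_neg (fun hc => h ((predFin_val_succ_eq_iff x).mp hc))]

theorem odF_append (a b : Vertex d) :
    odF d (a ++ b) = odF d a ++ (if ∀ x ∈ a, x.1 + 1 = d then odF d b else b) := by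
  induction a with
  | nil => simp [odF]
  | cons x t ih =>
    by_cases h : x.1 + 1 = d
    · by_cases h2 : ∀ y ∈ t, y.1 + 1 = d
      · have hall : ∀ y ∈ x :: t, y.1 + 1 = d := by
          intro y hy
          rcases List.mem_cons.mp hy with rfl | hy
          · exact h
          · exact h2 y hy
        simp only [List.cons_append, List.append_eq, odF, if_pos h, if_pos h2, if_pos hall, ih]
      · have hall : ¬ ∀ y ∈ x :: t, y.1 + 1 = d :=
          fun hc => h2 fun y hy => hc y (List.mem_cons_of_mem x hy)
        simp only [List.cons_append, List.append_eq, odF, if_pos h, if_neg h2, if_neg hall, ih]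
    · have hall : ¬ ∀ y ∈ x :: t, y.1 + 1 = d :=
        fun hc => h (hc x List.mem_cons_self)
      simp only [List.cons_append, List.append_eq, odF, if_neg h, if_neg hall]

theorem odG_append (a b : Vertex d) :
    odG d (a ++ b) = odG d a ++ (if ∀ x ∈ a, x.1 = 0 then odG d b else b) := by
  induction a with
  | nil => simp [odG]
  | cons x t ih =>
    by_cases h : x.1 = 0
    · by_cases h2 : ∀ y ∈ t, y.1 = 0
      · have hall : ∀ y ∈ x :: t, y.1 = 0 := by
          intro y hy
          rcases List.mem_cons.mp hy with rfl | hy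
          · exact h
          · exact h2 y hy
        simp only [List.cons_append, List.append_eq, odG, if_pos h, if_pos h2, if_pos hall, ih]
      · have hall : ¬ ∀ y ∈ x :: t, y.1 = 0 :=
          fun hc => h2 fun y hy => hc y (List.mem_cons_of_mem x hy)
        simp only [List.cons_append, List.append_eq, odG, if_pos h, if_neg h2, if_neg hall, ih]
    · have hall : ¬ ∀ y ∈ x :: t, y.1 = 0 :=
        fun hc => h (hc x List.mem_cons_self)
      simp only [List.cons_append, List.append_eq, odG, if_neg h, if_neg hall]

theorem LP_odF : LP d (odF d) := by
  constructor
  · intro w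
    induction w with
    | nil => rfl
    | cons x t ih =>
      simp only [odF]
      by_cases h : x.1 + 1 = d <;> simp [h, ih]
  · intro v w h
    obtain ⟨t, rfl⟩ := h
    rw [odF_append]
    exact ⟨_, rfl⟩

theorem LP_odG : LP d (odG d) := by
  constructor
  · intro w
    induction w with
    | nil => rfl
    | cons x t ih =>
      simp only [odG]
      by_cases h : x.1 = 0 <;> simp [h, ih]
  · intro v w h
    obtain ⟨t, rfl⟩ := h
    rw [odG_append]
    exact ⟨_, rfl⟩

/-- The standard odometer as a permutation of the vertices. -/
def odPerm (d : ℕ) : Equiv.Perm (Vertex d) where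
  toFun := odF d
  invFun := odG d
  left_inv := odG_odF
  right_inv := odF_odG

/-- The standard odometer `ω ∈ Aut T_d` (adds one to a `d`-adic digit string,
with carrying). -/
def od (d : ℕ) : AutT d :=
  ⟨odPerm d, ⟨LP_odF, LP_odG⟩⟩

/-- The standard `d`-cycle `σ = (0 1 … d-1)` on the first level. -/
def sigmaFin (d : ℕ) : Equiv.Perm (Fin d) where
  toFun := succFin
  invFun := predFin
  left_inv := predFin_succFin
  right_inv := succFin_predFin

end TreeDyn
namespace TreeDyn

open AutT

variable {d : ℕ}

/-! ### Topological structure of `AutT d` -/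

theorem toPerm_injective :
    Function.Injective (fun g : AutT d => (⇑g.toPerm : Vertex d → Vertex d)) := by
  intro a b h
  exact Subtype.ext (Equiv.ext fun x => congrFun h x)

theorem isEmbedding_toFun :
    Topology.IsEmbedding (fun g : AutT d => (⇑g.toPerm : Vertex d → Vertex d)) :=
  ⟨⟨rfl⟩, toPerm_injective⟩

instance : T2Space (AutT d) := isEmbedding_toFun.t2Space

instance : TotallyDisconnectedSpace (AutT d) := by
  refine isEmbedding_toFun.isTotallyDisconnected_range.mp ?_
  exact isTotallyDisconnected_of_totallyDisconnectedSpace _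

theorem LP_inv_of_bijective {f : Vertex d → Vertex d}
    (h1 : ∀ w : Vertex d, (f w).length = w.length)
    (h2 : ∀ v w : Vertex d, v <+: w → f v <+: f w) (hbij : Function.Bijective f) :
    LP d ⇑(Equiv.ofBijective f hbij).symm := by
  set g := Equiv.ofBijective f hbij with hg
  have key : ∀ w, f (g.symm w) = w := fun w => g.apply_symm_apply w
  have hlen : ∀ w : Vertex d, (g.symm w).length = w.length := by
    intro w
    have h := h1 (g.symm w)
    rw [key] at h
    exact h.symm
  refine ⟨hlen, ?_⟩
  intro v w hvw
  have hvwlen : v.length ≤ w.length := hvw.length_le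
  have hb' : (g.symm w).take v.length <+: g.symm w := List.take_prefix _ _
  have hfb : f ((g.symm w).take v.length) <+: w := by
    have := h2 _ _ hb'
    rwa [key] at this
  have hfblen : (f ((g.symm w).take v.length)).length = v.length := by
    rw [h1, List.length_take, hlen]
    omega
  have hfb_eq : f ((g.symm w).take v.length) = v := by
    have e1 := List.prefix_iff_eq_take.mp hfb
    have e2 := List.prefix_iff_eq_take.mp hvw
    rw [hfblen] at e1
    rw [e1, ← e2]
  have : g.symm v = (g.symm w).take v.length := by
    conv_lhs => rw [← hfb_eq]
    exact g.symm_apply_apply _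
  rw [this]
  exact List.take_prefix _ _

theorem range_toFun_eq :
    Set.range (fun g : AutT d => (⇑g.toPerm : Vertex d → Vertex d)) =
      {f : Vertex d → Vertex d | (∀ w : Vertex d, (f w).length = w.length) ∧
        (∀ v w : Vertex d, v <+: w → f v <+: f w) ∧ Function.Injective f} := by
  ext f
  constructor
  · rintro ⟨g, rfl⟩
    exact ⟨g.2.1.1, g.2.1.2, g.1.injective⟩
  · rintro ⟨h1, h2, hinj⟩
    have hsurj : Function.Surjective f := by
      intro w
      have hfin : Set.Finite {l : Vertex d | l.length = w.length} := List.finite_length_eq _ _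
      have hmaps : Set.MapsTo f {l : Vertex d | l.length = w.length}
          {l : Vertex d | l.length = w.length} := by
        intro x hx
        simp only [Set.mem_setOf_eq] at hx ⊢
        rw [h1, hx]
      have hbij := (hfin.injOn_iff_bijOn_of_mapsTo hmaps).mp hinj.injOn
      obtain ⟨u, -, hu⟩ := hbij.surjOn (show w ∈ {l : Vertex d | l.length = w.length} from rfl)
      exact ⟨u, hu⟩
    have hbij : Function.Bijective f := ⟨hinj, hsurj⟩
    exact ⟨⟨Equiv.ofBijective f hbij, ⟨h1, h2⟩, LP_inv_of_bijective h1 h2 hbij⟩, rfl⟩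

theorem isClosed_pair_rel (v w : Vertex d) (P : Vertex d → Vertex d → Prop) :
    IsClosed {f : Vertex d → Vertex d | P (f v) (f w)} := by
  have : {f : Vertex d → Vertex d | P (f v) (f w)} =
      (fun f : Vertex d → Vertex d => (f v, f w)) ⁻¹' {p : Vertex d × Vertex d | P p.1 p.2} :=
    rfl
  rw [this]
  exact (isClosed_discrete _).preimage ((continuous_apply v).prodMk (continuous_apply w))

theorem isClosed_range_toFun :
    IsClosed (Set.range (fun g : AutT d => (⇑g.toPerm : Vertex d → Vertex d))) := by
  rw [range_toFun_eq]
  have heq : {f : Vertex d → Vertex d | (∀ w : Vertex d, (f w).length = w.length) ∧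
        (∀ v w : Vertex d, v <+: w → f v <+: f w) ∧ Function.Injective f} =
      (⋂ w : Vertex d, {f : Vertex d → Vertex d | (f w).length = w.length}) ∩
        ((⋂ v : Vertex d, ⋂ w : Vertex d, {f : Vertex d → Vertex d | v <+: w → f v <+: f w}) ∩
          ⋂ v : Vertex d, ⋂ w : Vertex d, {f : Vertex d → Vertex d | f v = f w → v = w}) := by
    ext f
    simp only [Set.mem_setOf_eq, Set.mem_inter_iff, Set.mem_iInter, Function.Injective]
  rw [heq]
  refine IsClosed.inter (isClosed_iInter fun w => ?_)
    (IsClosed.inter (isClosed_iInter fun v => isClosed_iInter fun w =>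
        isClosed_pair_rel v w fun a b => v <+: w → a <+: b)
      (isClosed_iInter fun v => isClosed_iInter fun w =>
        isClosed_pair_rel v w fun a b => a = b → v = w))
  have : {f : Vertex d → Vertex d | (f w).length = w.length} =
      (fun f : Vertex d → Vertex d => f w) ⁻¹' {u : Vertex d | u.length = w.length} := rfl
  rw [this]
  exact (isClosed_discrete _).preimage (continuous_apply w)

instance : CompactSpace (AutT d) := by
  refine ⟨?_⟩
  rw [isEmbedding_toFun.isCompact_iff, Set.image_univ]
  have hC : IsCompact {f : Vertex d → Vertex d | ∀ w : Vertex d, (f w).length = w.length} := by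
    have : {f : Vertex d → Vertex d | ∀ w : Vertex d, (f w).length = w.length} =
        Set.pi Set.univ (fun w : Vertex d => {u : Vertex d | u.length = w.length}) := by
      ext f
      simp [Set.mem_pi]
    rw [this]
    exact isCompact_univ_pi fun w => (List.finite_length_eq _ w.length).isCompact
  refine hC.of_isClosed_subset isClosed_range_toFun ?_
  rw [range_toFun_eq]
  exact fun f hf => hf.1

/-! ### Continuity of sections; stabilizers -/

theorem continuous_sec (v : Vertex d) : Continuous fun g : AutT d => sec g v := by
  apply continuous_induced_rng.2
  show Continuous fun g : AutT d => (⇑(sec g v).toPerm : Vertex d → Vertex d)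
  apply continuous_pi
  intro u
  have : (fun g : AutT d => (sec g v).toPerm u) =
      (fun w : Vertex d => w.drop v.length) ∘ fun g : AutT d => g.toPerm (v ++ u) := rfl
  rw [this]
  exact Continuous.comp continuous_of_discreteTopology (continuous_ev _)

theorem isOpen_stabT (v : Vertex d) : IsOpen ((stabT d v : Subgroup (AutT d)) : Set (AutT d)) := by
  have : ((stabT d v : Subgroup (AutT d)) : Set (AutT d)) =
      (fun g : AutT d => g.toPerm v) ⁻¹' {v} := rfl
  rw [this]
  exact (isOpen_discrete _).preimage (continuous_ev v)

theorem isClosed_stabT (v : Vertex d) :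
    IsClosed ((stabT d v : Subgroup (AutT d)) : Set (AutT d)) := by
  have : ((stabT d v : Subgroup (AutT d)) : Set (AutT d)) =
      (fun g : AutT d => g.toPerm v) ⁻¹' {v} := rfl
  rw [this]
  exact (isClosed_discrete _).preimage (continuous_ev v)

/-! ### Basic properties of `secSG` -/

theorem mem_secSG_iff {H : Subgroup (AutT d)} {v : Vertex d} {x : AutT d} :
    x ∈ secSG d H v ↔ ∃ g : AutT d, g ∈ H ∧ g ∈ stabT d v ∧ sec g v = x := by
  constructor
  · rintro ⟨⟨g, hgs⟩, hgH, rfl⟩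
    exact ⟨g, Subgroup.mem_subgroupOf.mp hgH, hgs, rfl⟩
  · rintro ⟨g, hgH, hgs, rfl⟩
    exact ⟨⟨g, hgs⟩, Subgroup.mem_subgroupOf.mpr hgH, rfl⟩

theorem secSG_mono {H K : Subgroup (AutT d)} (h : H ≤ K) (v : Vertex d) :
    secSG d H v ≤ secSG d K v := by
  intro x hx
  obtain ⟨g, hgH, hgs, rfl⟩ := mem_secSG_iff.mp hx
  exact mem_secSG_iff.mpr ⟨g, h hgH, hgs, rfl⟩

theorem secSG_coe (H : Subgroup (AutT d)) (v : Vertex d) :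
    ((secSG d H v : Subgroup (AutT d)) : Set (AutT d)) =
      (fun g : AutT d => sec g v) '' (((H ⊓ stabT d v : Subgroup (AutT d))) : Set (AutT d)) := by
  ext x
  simp only [SetLike.mem_coe, mem_secSG_iff, Set.mem_image, Subgroup.mem_inf]
  constructor
  · rintro ⟨g, h1, h2, rfl⟩
    exact ⟨g, ⟨h1, h2⟩, rfl⟩
  · rintro ⟨g, ⟨h1, h2⟩, rfl⟩
    exact ⟨g, h1, h2, rfl⟩

theorem isClosed_secSG {H : Subgroup (AutT d)} (hH : IsClosed (H : Set (AutT d)))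
    (v : Vertex d) : IsClosed ((secSG d H v : Subgroup (AutT d)) : Set (AutT d)) := by
  rw [secSG_coe]
  have hcomp : IsCompact (((H ⊓ stabT d v : Subgroup (AutT d))) : Set (AutT d)) := by
    rw [Subgroup.coe_inf]
    exact (hH.inter (isClosed_stabT v)).isCompact
  exact (hcomp.image (continuous_sec v)).isClosed

/-! ### Transfer lemmas between subgroups of `AutT d` and subgroups of a closed subgroup -/

theorem subgroupOf_mono {X : Type*} [Group X] {A B G : Subgroup X} (h : A ≤ B) :
    A.subgroupOf G ≤ B.subgroupOf G := fun _ hx => h hx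

theorem isClosed_subgroupOf {X : Type*} [Group X] [TopologicalSpace X] {A : Subgroup X}
    (G : Subgroup X) (hA : IsClosed (A : Set X)) :
    IsClosed ((A.subgroupOf G : Subgroup G) : Set G) := by
  have : ((A.subgroupOf G : Subgroup G) : Set G) =
      (Subtype.val : G → X) ⁻¹' (A : Set X) := rfl
  rw [this]
  exact hA.preimage continuous_subtype_val

theorem subgroupOf_sup_eq {A B G : Subgroup (AutT d)} (hA : A ≤ G) (hB : B ≤ G) :
    (A ⊔ B).subgroupOf G = A.subgroupOf G ⊔ B.subgroupOf G := by
  apply Subgroup.map_injective G.subtype_injective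
  rw [Subgroup.subgroupOf_map_subtype, Subgroup.map_sup, Subgroup.subgroupOf_map_subtype,
    Subgroup.subgroupOf_map_subtype, inf_of_le_left hA, inf_of_le_left hB,
    inf_of_le_left (sup_le hA hB)]

theorem subgroupOf_iSup_eq {G : Subgroup (AutT d)} {K : ℕ → Subgroup (AutT d)}
    (hK : ∀ n, K n ≤ G) :
    (⨆ n, K n).subgroupOf G = ⨆ n, (K n).subgroupOf G := by
  apply Subgroup.map_injective G.subtype_injective
  rw [Subgroup.subgroupOf_map_subtype, Subgroup.map_iSup]
  simp only [Subgroup.subgroupOf_map_subtype]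
  rw [inf_of_le_left (iSup_le hK)]
  exact (iSup_congr fun n => inf_of_le_left (hK n)).symm

theorem closure_preimage_val {G : Subgroup (AutT d)} (hG : IsClosed (G : Set (AutT d)))
    {s : Set (AutT d)} (hs : s ⊆ (G : Set (AutT d))) :
    closure ((Subtype.val : G → AutT d) ⁻¹' s) = Subtype.val ⁻¹' closure s := by
  have hemb : Topology.IsClosedEmbedding (Subtype.val : G → AutT d) :=
    Topology.IsClosedEmbedding.subtypeVal hG
  have hinj : Function.Injective (Subtype.val : G → AutT d) := Subtype.coe_injective
  conv_lhs => rw [← Set.preimage_image_eq (closure ((Subtype.val : G → AutT d) ⁻¹' s)) hinj]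
  rw [← hemb.closure_image_eq, Set.image_preimage_eq_inter_range, Subtype.range_val,
    Set.inter_eq_left.mpr hs]

theorem subgroupOf_topologicalClosure {A G : Subgroup (AutT d)}
    (hG : IsClosed (G : Set (AutT d))) (hA : A ≤ G) :
    (A.subgroupOf G).topologicalClosure = A.topologicalClosure.subgroupOf G := by
  apply SetLike.ext'
  rw [Subgroup.topologicalClosure_coe]
  have h1 : ((A.subgroupOf G : Subgroup G) : Set G) =
      (Subtype.val : G → AutT d) ⁻¹' (A : Set (AutT d)) := rfl
  have h2 : ((A.topologicalClosure.subgroupOf G : Subgroup G) : Set G) =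
      (Subtype.val : G → AutT d) ⁻¹' (A.topologicalClosure : Set (AutT d)) := rfl
  rw [h1, h2, Subgroup.topologicalClosure_coe]
  exact closure_preimage_val hG hA


/-! ### The restricted section homomorphism into a fractal group -/

theorem sec_one (v : Vertex d) : sec (1 : AutT d) v = 1 :=
  (secHom d v).map_one

theorem sec_mul {v : Vertex d} {g h : AutT d} (hg : g ∈ stabT d v) (hh : h ∈ stabT d v) :
    sec (g * h) v = sec g v * sec h v :=
  (secHom d v).map_mul ⟨g, hg⟩ ⟨h, hh⟩

variable (G : Subgroup (AutT d)) (v : Vertex d)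

/-- The section homomorphism, restricted to the stabilizer of `v` inside `G` and
corestricted to `G` (using `G^v ≤ G`). -/
def secRestrict (hle : secSG d G v ≤ G) :
    ((G ⊓ stabT d v).subgroupOf G : Subgroup G) →* G where
  toFun x :=
    ⟨sec (x.1 : AutT d) v,
      hle (mem_secSG_iff.mpr ⟨(x.1 : AutT d), (Subgroup.mem_subgroupOf.mp x.2).1,
        (Subgroup.mem_subgroupOf.mp x.2).2, rfl⟩)⟩
  map_one' := Subtype.ext (sec_one v)
  map_mul' x y := Subtype.ext
    (sec_mul (Subgroup.mem_subgroupOf.mp x.2).2 (Subgroup.mem_subgroupOf.mp y.2).2)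

theorem continuous_secRestrict (hle : secSG d G v ≤ G) :
    Continuous (secRestrict G v hle) := by
  apply Continuous.subtype_mk
  exact (continuous_sec v).comp (continuous_subtype_val.comp continuous_subtype_val)

theorem secRestrict_surjective (hle : secSG d G v ≤ G) (hfr : secSG d G v = G) :
    Function.Surjective (secRestrict G v hle) := by
  rintro ⟨x, hxG⟩
  have hx : x ∈ secSG d G v := hfr.symm ▸ hxG
  obtain ⟨g, hgG, hgs, rfl⟩ := mem_secSG_iff.mp hx
  exact ⟨⟨⟨g, hgG⟩, Subgroup.mem_subgroupOf.mpr (Subgroup.mem_inf.mpr ⟨hgG, hgs⟩)⟩, rfl⟩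

theorem map_secRestrict (hle : secSG d G v ≤ G) (A : Subgroup (AutT d)) (hA : A ≤ G) :
    ((((A.subgroupOf G).subgroupOf ((G ⊓ stabT d v).subgroupOf G)).map
        (secRestrict G v hle)).map G.subtype) = secSG d A v := by
  ext x
  constructor
  · rintro ⟨y, hy, rfl⟩
    obtain ⟨z, hz, rfl⟩ := hy
    have hzA : (z.1 : AutT d) ∈ A := Subgroup.mem_subgroupOf.mp (Subgroup.mem_subgroupOf.mp hz)
    have hzs : (z.1 : AutT d) ∈ stabT d v := (Subgroup.mem_subgroupOf.mp z.2).2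
    exact mem_secSG_iff.mpr ⟨(z.1 : AutT d), hzA, hzs, rfl⟩
  · intro hx
    obtain ⟨g, hgA, hgs, rfl⟩ := mem_secSG_iff.mp hx
    refine ⟨secRestrict G v hle
      ⟨⟨g, hA hgA⟩, Subgroup.mem_subgroupOf.mpr (Subgroup.mem_inf.mpr ⟨hA hgA, hgs⟩)⟩,
      ⟨⟨⟨g, hA hgA⟩, Subgroup.mem_subgroupOf.mpr (Subgroup.mem_inf.mpr ⟨hA hgA, hgs⟩)⟩,
        Subgroup.mem_subgroupOf.mpr (Subgroup.mem_subgroupOf.mpr hgA), rfl⟩, rfl⟩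


end TreeDyn

namespace TreeDyn

open AutT

/-- **Formation-style criterion for self-similar properties.**
Let `Q` be a property of pairs `(G, H)` of a profinite group and a closed subgroup,
preserved by (a) passing to closed subgroups, (b) images under continuous surjections of
profinite groups, (c) closed joins, and (d) closures of unions of chains.  Then for every
`d ≥ 2` and every closed fractal subgroup `G` of `Aut T_d`, the property `H ↦ Q(G,H)` of
closed subgroups of `G` is self-similar: it passes to self-similar closures. -/
theorem formation_criterion_selfSimilar
    (Q : ∀ (G : Type) [Group G] [TopologicalSpace G], Subgroup G → Prop)
    (ha : ∀ (G : Type) [Group G] [TopologicalSpace G] [IsTopologicalGroup G] [CompactSpace G]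
      [TotallyDisconnectedSpace G] [T2Space G] (H K : Subgroup G),
      IsClosed (H : Set G) → IsClosed (K : Set G) → Q G H → Q K (H.subgroupOf K))
    (hb : ∀ (G G' : Type) [Group G] [TopologicalSpace G] [IsTopologicalGroup G]
      [CompactSpace G] [TotallyDisconnectedSpace G] [T2Space G] [Group G']
      [TopologicalSpace G'] [IsTopologicalGroup G'] [CompactSpace G']
      [TotallyDisconnectedSpace G'] [T2Space G'] (π : G →* G'),
      Continuous π → Function.Surjective π →
      ∀ H : Subgroup G, IsClosed (H : Set G) → Q G H → Q G' (H.map π))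
    (hc : ∀ (G : Type) [Group G] [TopologicalSpace G] [IsTopologicalGroup G] [CompactSpace G]
      [TotallyDisconnectedSpace G] [T2Space G] (H K : Subgroup G),
      IsClosed (H : Set G) → IsClosed (K : Set G) → Q G H → Q G K →
      Q G ((H ⊔ K).topologicalClosure))
    (hchain : ∀ (G : Type) [Group G] [TopologicalSpace G] [IsTopologicalGroup G]
      [CompactSpace G] [TotallyDisconnectedSpace G] [T2Space G]
      (I : Type) (Hs : I → Subgroup G), (∀ i, IsClosed ((Hs i) : Set G)) →
      (∀ i j, Hs i ≤ Hs j ∨ Hs j ≤ Hs i) → (∀ i, Q G (Hs i)) →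
      Q G ((⨆ i, Hs i).topologicalClosure))
    (d : ℕ) (hd : 2 ≤ d)
    (G : Subgroup (AutT d)) (hGclosed : IsClosed (G : Set (AutT d)))
    (hGfractal : IsFractal d G)
    (H : Subgroup (AutT d)) (hHG : H ≤ G) (hHclosed : IsClosed (H : Set (AutT d)))
    (hQH : Q G (H.subgroupOf G)) :
    ∀ J : Subgroup (AutT d), IsSelfSimilarClosure d G H J → Q G (J.subgroupOf G) := by
  intro J hJ
  obtain ⟨hHJ, hJG, hJclosed, hJss, hJmin⟩ := hJ
  haveI : CompactSpace ↥G := isCompact_iff_compactSpace.mp hGclosed.isCompact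
  obtain ⟨s, hs⟩ := exists_surjective_nat (Vertex d)
  set fv : ℕ → Vertex d := fun n => s (Nat.unpair n).1 with hfv
  have hfhit : ∀ (n : ℕ) (v : Vertex d), ∃ m, n ≤ m ∧ fv m = v := by
    intro n v
    obtain ⟨k, hk⟩ := hs v
    refine ⟨Nat.pair k n, Nat.right_le_pair k n, ?_⟩
    simp [hfv, Nat.unpair_pair, hk]
  set K : ℕ → Subgroup (AutT d) :=
    fun n => Nat.rec H (fun m Km => (Km ⊔ secSG d Km (fv m)).topologicalClosure) n with hK
  have hK0 : K 0 = H := rfl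
  have hKsucc : ∀ n, K (n + 1) = (K n ⊔ secSG d (K n) (fv n)).topologicalClosure := fun _ => rfl
  have hKG : ∀ n, K n ≤ G := by
    intro n
    induction n with
    | zero => exact hHG
    | succ m ih =>
      rw [hKsucc m]
      exact Subgroup.topologicalClosure_minimal _
        (sup_le ih ((secSG_mono ih _).trans (le_of_eq (hGfractal _)))) hGclosed
  have hKcl : ∀ n, IsClosed ((K n : Subgroup (AutT d)) : Set (AutT d)) := by
    intro n
    cases n with
    | zero => exact hHclosed
    | succ m =>
      rw [hKsucc m]
      exact Subgroup.isClosed_topologicalClosure _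
  have hKmono : Monotone K := by
    apply monotone_nat_of_le_succ
    intro n
    rw [hKsucc n]
    exact le_sup_left.trans (Subgroup.le_topologicalClosure _)
  have step_sec : ∀ (A : Subgroup (AutT d)) (v : Vertex d), A ≤ G →
      IsClosed (A : Set (AutT d)) → Q ↥G (A.subgroupOf G) →
      Q ↥G ((secSG d A v).subgroupOf G) := by
    intro A v hAG hAcl hQA
    have hle : secSG d G v ≤ G := le_of_eq (hGfractal v)
    set Kv : Subgroup ↥G := (G ⊓ stabT d v).subgroupOf G with hKv
    have hKvcl : IsClosed ((Kv : Subgroup ↥G) : Set ↥G) := by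
      apply isClosed_subgroupOf
      rw [Subgroup.coe_inf]
      exact hGclosed.inter (isClosed_stabT v)
    haveI : CompactSpace ↥Kv := isCompact_iff_compactSpace.mp hKvcl.isCompact
    have h1 : Q ↥Kv ((A.subgroupOf G).subgroupOf Kv) :=
      ha ↥G (A.subgroupOf G) Kv (isClosed_subgroupOf G hAcl) hKvcl hQA
    have h2 : Q ↥G (((A.subgroupOf G).subgroupOf Kv).map (secRestrict G v hle)) :=
      hb ↥Kv ↥G (secRestrict G v hle) (continuous_secRestrict G v hle)
        (secRestrict_surjective G v hle (hGfractal v)) _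
        (isClosed_subgroupOf Kv (isClosed_subgroupOf G hAcl)) h1
    have hident : (((A.subgroupOf G).subgroupOf Kv).map (secRestrict G v hle)) =
        (secSG d A v).subgroupOf G := by
      rw [← map_secRestrict G v hle A hAG]
      exact (Subgroup.comap_map_eq_self_of_injective G.subtype_injective _).symm
    exact hident ▸ h2
  have step_join : ∀ A B : Subgroup (AutT d), A ≤ G → B ≤ G →
      IsClosed (A : Set (AutT d)) → IsClosed (B : Set (AutT d)) →
      Q ↥G (A.subgroupOf G) → Q ↥G (B.subgroupOf G) →
      Q ↥G (((A ⊔ B).topologicalClosure).subgroupOf G) := by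
    intro A B hAG hBG hAcl hBcl hQA hQB
    have h := hc ↥G (A.subgroupOf G) (B.subgroupOf G) (isClosed_subgroupOf G hAcl)
      (isClosed_subgroupOf G hBcl) hQA hQB
    rwa [← subgroupOf_sup_eq hAG hBG,
      subgroupOf_topologicalClosure hGclosed (sup_le hAG hBG)] at h
  have hKQ : ∀ n, Q ↥G ((K n).subgroupOf G) := by
    intro n
    induction n with
    | zero => exact hQH
    | succ m ih =>
      rw [hKsucc m]
      exact step_join (K m) (secSG d (K m) (fv m)) (hKG m)
        ((secSG_mono (hKG m) _).trans (le_of_eq (hGfractal _)))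
        (hKcl m) (isClosed_secSG (hKcl m) _) ih (step_sec (K m) (fv m) (hKG m) (hKcl m) ih)
  set U : Subgroup (AutT d) := ⨆ n, K n with hU
  set J' : Subgroup (AutT d) := U.topologicalClosure with hJ'
  have hUG : U ≤ G := iSup_le hKG
  have hJ'G : J' ≤ G := Subgroup.topologicalClosure_minimal _ hUG hGclosed
  have hJ'cl : IsClosed (J' : Set (AutT d)) := Subgroup.isClosed_topologicalClosure _
  have hHJ' : H ≤ J' :=
    le_trans (le_of_eq hK0.symm) ((le_iSup K 0).trans (Subgroup.le_topologicalClosure _))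
  have hJ'coe : (J' : Set (AutT d)) = closure (U : Set (AutT d)) :=
    Subgroup.topologicalClosure_coe
  have hJ'ss : IsSelfSimilar d J' := by
    intro v x hx
    obtain ⟨g, hgJ', hgs, rfl⟩ := mem_secSG_iff.mp hx
    have hg2 : g ∈ closure (((stabT d v : Subgroup (AutT d)) : Set (AutT d)) ∩
        (U : Set (AutT d))) := by
      apply (isOpen_stabT v).inter_closure
      refine ⟨hgs, ?_⟩
      rw [← hJ'coe]
      exact hgJ'
    have hmem : sec g v ∈ closure (U : Set (AutT d)) := by
      refine map_mem_closure (f := fun g : AutT d => sec g v) (continuous_sec v) hg2 ?_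
      rintro h ⟨hhs, hhU⟩
      have hdir : Directed (· ≤ ·) K := hKmono.directed_le
      obtain ⟨n, hn⟩ := (Subgroup.mem_iSup_of_directed hdir).mp hhU
      obtain ⟨m, hm, hfm⟩ := hfhit n v
      have h1 : sec h v ∈ secSG d (K m) v :=
        mem_secSG_iff.mpr ⟨h, hKmono hm hn, hhs, rfl⟩
      have h2 : sec h v ∈ K (m + 1) := by
        rw [hKsucc m, hfm]
        exact Subgroup.le_topologicalClosure _ (Subgroup.mem_sup_right h1)
      exact (Subgroup.mem_iSup_of_directed hdir).mpr ⟨m + 1, h2⟩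
    show sec g v ∈ J'
    rw [← SetLike.mem_coe, hJ'coe]
    exact hmem
  have hchainQ : Q ↥G (J'.subgroupOf G) := by
    have htot : ∀ i j : ℕ, (K i).subgroupOf G ≤ (K j).subgroupOf G ∨
        (K j).subgroupOf G ≤ (K i).subgroupOf G := by
      intro i j
      rcases le_total i j with h | h
      · exact Or.inl (subgroupOf_mono (hKmono h))
      · exact Or.inr (subgroupOf_mono (hKmono h))
    have h := hchain ↥G ℕ (fun n => (K n).subgroupOf G)
      (fun n => isClosed_subgroupOf G (hKcl n)) htot hKQ
    rwa [← subgroupOf_iSup_eq hKG, subgroupOf_topologicalClosure hGclosed hUG] at h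
  have hle1 : J ≤ J' := hJmin J' hHJ' hJ'G hJ'cl hJ'ss
  have hKJ : ∀ n, K n ≤ J := by
    intro n
    induction n with
    | zero => exact hHJ
    | succ m ih =>
      rw [hKsucc m]
      exact Subgroup.topologicalClosure_minimal _
        (sup_le ih ((secSG_mono ih _).trans (hJss _))) hJclosed
  have hle2 : J' ≤ J := Subgroup.topologicalClosure_minimal _ (iSup_le hKJ) hJclosed
  have hJJ' : J = J' := le_antisymm hle1 hle2
  rw [hJJ']
  exact hchainQ

end TreeDyn
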